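/- Let L ⊆ A* be a language over a finite alphabet A and m ≥ 2. For any numeration system U (increasing, U_0 = 1, bounded ratio), the number of distinct left quotients w⁻¹(0* rep_U(mℕ)) for w ranging over prefixes of rep_U(m) is at least |rep_U(m)|; hence the minimal automaton of 0* rep_U(mℕ) has at least |rep_U(m)| states. -/

import Mathlib

/-- Numerical value of a word of digits, most significant digit first:
the head digit multiplies `U` at the position given by the tail length. -/
def nval (U : ℕ → ℕ) : List ℕ → ℕ
  | [] => 0
  | d :: t => d * U t.length + nval U t

/-- A word (msd first) is greedy if every suffix `s` satisfies `nval s < U |s|`. -/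
def NGreedy (U : ℕ → ℕ) (w : List ℕ) : Prop :=
  ∀ s : List ℕ, s <:+ w → nval U s < U s.length

theorem quotients_lower_bound
    (U : ℕ → ℕ) (hU : StrictMono U) (h0 : U 0 = 1)
    (C : ℕ) (hC : ∀ n, U (n + 1) ≤ C * U n)
    (m : ℕ) (hm : 2 ≤ m)
    (rep : List ℕ) (hg : NGreedy U rep) (hval : nval U rep = m)
    (hne : rep ≠ []) (hlead : rep.headI ≠ 0) :
    rep.length ≤ Set.ncard
      {S : Set (List ℕ) | ∃ p, p <+: rep ∧
        S = {x | NGreedy U (p ++ x) ∧ m ∣ nval U (p ++ x)}} := by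
  classical
  set n := rep.length with hn
  set f : ℕ → Set (List ℕ) := fun i =>
    {x | NGreedy U (rep.take i ++ x) ∧ m ∣ nval U (rep.take i ++ x)} with hf
  set T : Set (Set (List ℕ)) :=
    {S : Set (List ℕ) | ∃ p, p <+: rep ∧
      S = {x | NGreedy U (p ++ x) ∧ m ∣ nval U (p ++ x)}} with hT
  have hU1 : ∀ k, 1 ≤ U k := fun k => h0 ▸ hU.monotone (Nat.zero_le k)
  obtain ⟨a, t, rfl⟩ := List.exists_cons_of_ne_nil hne
  have ha : a ≠ 0 := hlead
  have hnlen : n = t.length + 1 := by simp [hn]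
  have hmU : U t.length ≤ m := by
    rw [← hval]
    show U t.length ≤ a * U t.length + nval U t
    have : 1 * U t.length ≤ a * U t.length :=
      Nat.mul_le_mul_right _ (Nat.one_le_iff_ne_zero.mpr ha)
    omega
  -- key injectivity
  have key : ∀ i j, 1 ≤ i → i < j → j ≤ n → f i ≠ f j := by
    intro i j hi hij hjn hfeq
    have hx : (a :: t).drop j ∈ f j := by
      simp only [hf, Set.mem_setOf_eq, List.take_append_drop]
      exact ⟨hg, hval ▸ dvd_refl m⟩
    rw [← hfeq] at hx
    obtain ⟨hgw, hdw⟩ := hx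
    set w := (a :: t).take i ++ (a :: t).drop j with hw
    have hlen : w.length < n := by
      simp only [hw, List.length_append, List.length_take, List.length_drop]
      omega
    have h1 : nval U w < U w.length := hgw w (List.suffix_refl w)
    have h2 : U w.length ≤ U t.length := hU.monotone (by omega)
    have h3 : nval U w < m := lt_of_lt_of_le (lt_of_lt_of_le h1 h2) hmU
    have h4 : 0 < nval U w := by
      obtain ⟨i', rfl⟩ : ∃ i', i = i' + 1 := ⟨i - 1, by omega⟩
      have : w = a :: (t.take i' ++ (a :: t).drop j) := by
        simp [hw, List.take_succ_cons]
      rw [this]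
      show 0 < a * U _ + nval U _
      have : 1 * 1 ≤ a * U (t.take i' ++ (a :: t).drop j).length :=
        Nat.mul_le_mul (Nat.one_le_iff_ne_zero.mpr ha) (hU1 _)
      omega
    have := Nat.le_of_dvd h4 hdw
    omega
  have hinj : Set.InjOn f (Set.Icc 1 n) := by
    intro i hi j hj hfij
    rcases lt_trichotomy i j with h | h | h
    · exact absurd hfij (key i j hi.1 h hj.2)
    · exact h
    · exact absurd hfij.symm (key j i hj.1 h hi.2)
  have hsub : f '' Set.Icc 1 n ⊆ T := by
    rintro S ⟨i, hi, rfl⟩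
    exact ⟨(a :: t).take i, List.take_prefix i _, rfl⟩
  have hTsub : T ⊆ f '' Set.Iic n := by
    rintro S ⟨p, hp, rfl⟩
    refine ⟨p.length, ?_, ?_⟩
    · exact hp.length_le
    · obtain ⟨l, hl⟩ := hp
      have htk : (a :: t).take p.length = p := by
        rw [← hl]; exact List.take_left
      simp only [hf, htk]
  have hTfin : T.Finite := Set.Finite.subset ((Set.finite_Iic n).image f) hTsub
  have hIcc : (Set.Icc 1 n).ncard = n := by
    rw [← Finset.coe_Icc, Set.ncard_coe_finset, Nat.card_Icc]
    omega
  calc n = (Set.Icc 1 n).ncard := hIcc.symm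
    _ = (f '' Set.Icc 1 n).ncard := (Set.ncard_image_of_injOn hinj).symm
    _ ≤ T.ncard := Set.ncard_le_ncard hsub hTfin
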